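/- arXiv:2205.00455 — 2 statements merged into one kernel-verified Lean document; each statement's English description precedes it below -/
import Mathlib

section
/- For matrices $M, N \in \mathbb{C}^{m \times n}$ and any index $i \le \min(m,n)$, the $i$-th largest singular values satisfy $|\sigma_i(M) - \sigma_i(N)| \le \|M - N\|_2$, where $\|\cdot\|_2$ is the spectral norm. -/
open Matrix Finset

/-- Spectral (l2 operator) norm of a complex matrix. -/
noncomputable def specNorm {m n : ℕ} (A : Matrix (Fin m) (Fin n) ℂ) : ℝ :=
  ‖LinearMap.toContinuousLinearMap (Matrix.toEuclideanLin A)‖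

namespace WeylAux

variable {m n : ℕ}

noncomputable def ev (M : Matrix (Fin m) (Fin n) ℂ) : Fin n → ℝ :=
  (Matrix.isHermitian_conjTranspose_mul_self M).eigenvalues

noncomputable def evb (M : Matrix (Fin m) (Fin n) ℂ) :
    OrthonormalBasis (Fin n) ℂ (EuclideanSpace ℂ (Fin n)) :=
  (Matrix.isHermitian_conjTranspose_mul_self M).eigenvectorBasis

lemma ev_nonneg (M : Matrix (Fin m) (Fin n) ℂ) (j : Fin n) : 0 ≤ ev M j :=
  Matrix.eigenvalues_conjTranspose_mul_self_nonneg M j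

lemma toEuclideanLin_A (M : Matrix (Fin m) (Fin n) ℂ) (x : EuclideanSpace ℂ (Fin n)) :
    toEuclideanLin (Mᴴ * M) x = toEuclideanLin Mᴴ (toEuclideanLin M x) := by
  simp [Matrix.toEuclideanLin_apply, Matrix.mulVec_mulVec]

lemma A_apply_evb (M : Matrix (Fin m) (Fin n) ℂ) (j : Fin n) :
    toEuclideanLin (Mᴴ * M) (evb M j) = (ev M j : ℂ) • evb M j := by
  have h := (Matrix.isHermitian_conjTranspose_mul_self M).mulVec_eigenvectorBasis j
  rw [Matrix.toEuclideanLin_apply]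
  ext k
  have := congrFun h k
  simpa [ev, evb, RCLike.real_smul_eq_coe_mul] using this

lemma repr_A (M : Matrix (Fin m) (Fin n) ℂ) (x : EuclideanSpace ℂ (Fin n)) (j : Fin n) :
    (evb M).repr (toEuclideanLin (Mᴴ * M) x) j = (ev M j : ℂ) * (evb M).repr x j := by
  have hsym : (toEuclideanLin (Mᴴ * M)).IsSymmetric :=
    Matrix.isHermitian_iff_isSymmetric.1 (Matrix.isHermitian_conjTranspose_mul_self M)
  rw [OrthonormalBasis.repr_apply_apply, OrthonormalBasis.repr_apply_apply,
    ← hsym (evb M j) x, A_apply_evb, inner_smul_left]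
  simp

lemma norm_sq_eq_sum (b : OrthonormalBasis (Fin n) ℂ (EuclideanSpace ℂ (Fin n)))
    (x : EuclideanSpace ℂ (Fin n)) : ‖x‖ ^ 2 = ∑ j, ‖b.repr x j‖ ^ 2 := by
  rw [← b.repr.norm_map x, EuclideanSpace.norm_eq,
    Real.sq_sqrt (Finset.sum_nonneg fun j _ => sq_nonneg _)]

lemma norm_toEuclideanLin_sq (M : Matrix (Fin m) (Fin n) ℂ) (x : EuclideanSpace ℂ (Fin n)) :
    ‖toEuclideanLin M x‖ ^ 2 = ∑ j, ev M j * ‖(evb M).repr x j‖ ^ 2 := by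
  have h1 : (‖toEuclideanLin M x‖ : ℝ) ^ 2
      = RCLike.re (inner (𝕜 := ℂ) x (toEuclideanLin (Mᴴ * M) x)) := by
    rw [toEuclideanLin_A, Matrix.toEuclideanLin_conjTranspose_eq_adjoint,
      LinearMap.adjoint_inner_right, inner_self_eq_norm_sq (𝕜 := ℂ)]
  rw [h1, ← (evb M).repr.inner_map_map x (toEuclideanLin (Mᴴ * M) x)]
  rw [PiLp.inner_apply]
  rw [map_sum]
  refine Finset.sum_congr rfl fun j _ => ?_
  rw [repr_A]
  simp only [RCLike.inner_apply]
  rw [show (ev M j : ℂ) * (evb M).repr x j * (starRingEnd ℂ) ((evb M).repr x j)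
      = (ev M j : ℂ) * ((starRingEnd ℂ) ((evb M).repr x j) * (evb M).repr x j) by ring,
    RCLike.conj_mul]
  rw [← RCLike.ofReal_pow]
  simp [RCLike.mul_re]
  left
  rw [← Complex.ofReal_pow, Complex.ofReal_re]

lemma repr_eq_zero_of_mem_span (b : OrthonormalBasis (Fin n) ℂ (EuclideanSpace ℂ (Fin n)))
    (s : Finset (Fin n)) {x : EuclideanSpace ℂ (Fin n)}
    (hx : x ∈ Submodule.span ℂ (b '' ↑s)) {j : Fin n} (hj : j ∉ s) : b.repr x j = 0 := by
  induction hx using Submodule.span_induction with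
  | mem y hy =>
    obtain ⟨k, hk, rfl⟩ := hy
    rw [b.repr_self]
    have : j ≠ k := fun h => hj (h ▸ hk)
    simp [EuclideanSpace.single_apply, this]
  | zero => simp
  | add y z _ _ hy hz => simp [map_add, hy, hz]
  | smul c y _ hy => simp [_root_.map_smul, hy]

lemma finrank_span_basis_image (b : OrthonormalBasis (Fin n) ℂ (EuclideanSpace ℂ (Fin n)))
    (s : Finset (Fin n)) :
    Module.finrank ℂ (Submodule.span ℂ (b '' ↑s)) = s.card := by
  have hli : LinearIndependent ℂ (fun j : {j // j ∈ s} => b j) :=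
    b.toBasis.linearIndependent.comp Subtype.val Subtype.val_injective
  have hrange : Set.range (fun j : {j // j ∈ s} => b j) = b '' ↑s := by
    have h0 : (fun j : {j // j ∈ s} => b j) = b ∘ Subtype.val := rfl
    rw [h0, Set.range_comp, Subtype.range_val]
  rw [← hrange, finrank_span_eq_card hli, Fintype.card_coe]

/-- lower bound: on span of eigenvectors with eigenvalue ≥ t, ‖Mx‖² ≥ t‖x‖². -/
lemma sq_norm_ge (M : Matrix (Fin m) (Fin n) ℂ) (t : ℝ)
    {x : EuclideanSpace ℂ (Fin n)}
    (hx : x ∈ Submodule.span ℂ (evb M '' ↑(Finset.univ.filter fun j => t ≤ ev M j))) :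
    t * ‖x‖ ^ 2 ≤ ‖toEuclideanLin M x‖ ^ 2 := by
  rw [norm_toEuclideanLin_sq, norm_sq_eq_sum (evb M), Finset.mul_sum]
  refine Finset.sum_le_sum fun j _ => ?_
  by_cases hj : j ∈ Finset.univ.filter fun j => t ≤ ev M j
  · exact mul_le_mul_of_nonneg_right (Finset.mem_filter.1 hj).2 (sq_nonneg _)
  · rw [repr_eq_zero_of_mem_span (evb M) _ hx hj]
    simp

/-- upper bound: on span of eigenvectors with eigenvalue ≤ t, ‖Mx‖² ≤ t‖x‖². -/
lemma sq_norm_le (M : Matrix (Fin m) (Fin n) ℂ) (t : ℝ)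
    {x : EuclideanSpace ℂ (Fin n)}
    (hx : x ∈ Submodule.span ℂ (evb M '' ↑(Finset.univ.filter fun j => ev M j ≤ t))) :
    ‖toEuclideanLin M x‖ ^ 2 ≤ t * ‖x‖ ^ 2 := by
  rw [norm_toEuclideanLin_sq, norm_sq_eq_sum (evb M), Finset.mul_sum]
  refine Finset.sum_le_sum fun j _ => ?_
  by_cases hj : j ∈ Finset.univ.filter fun j => ev M j ≤ t
  · exact mul_le_mul_of_nonneg_right (Finset.mem_filter.1 hj).2 (sq_nonneg _)
  · rw [repr_eq_zero_of_mem_span (evb M) _ hx hj]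
    simp

lemma weyl_one_side (M N : Matrix (Fin m) (Fin n) ℂ)
    (σM σN : Fin n → ℝ) (hM1 : Antitone σM)
    (hM2 : ∃ e : Equiv.Perm (Fin n), ∀ j, σM j = Real.sqrt (ev M (e j)))
    (hN1 : Antitone σN)
    (hN2 : ∃ e : Equiv.Perm (Fin n), ∀ j, σN j = Real.sqrt (ev N (e j)))
    (i : Fin n) :
    σM i - σN i ≤ specNorm (M - N) := by
  obtain ⟨eM, heM⟩ := hM2
  obtain ⟨eN, heN⟩ := hN2
  have hσM0 : ∀ j, 0 ≤ σM j := fun j => (heM j) ▸ Real.sqrt_nonneg _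
  have hσN0 : ∀ j, 0 ≤ σN j := fun j => (heN j) ▸ Real.sqrt_nonneg _
  have hμM : ∀ j, ev M (eM j) = σM j ^ 2 := fun j => by
    rw [heM j, Real.sq_sqrt (ev_nonneg M _)]
  have hμN : ∀ j, ev N (eN j) = σN j ^ 2 := fun j => by
    rw [heN j, Real.sq_sqrt (ev_nonneg N _)]
  set sM := Finset.univ.filter fun j => σM i ^ 2 ≤ ev M j with hsM
  set sN := Finset.univ.filter fun j => ev N j ≤ σN i ^ 2 with hsN
  have hcM : (i : ℕ) + 1 ≤ sM.card := by
    have h : (Finset.Iic i).card ≤ sM.card := by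
      refine Finset.card_le_card_of_injOn eM (fun j hj => ?_) eM.injective.injOn
      rw [hsM, Finset.mem_coe, Finset.mem_filter]
      refine ⟨Finset.mem_univ _, ?_⟩
      rw [hμM j]
      exact pow_le_pow_left₀ (hσM0 i) (hM1 (Finset.mem_Iic.1 hj)) 2
    rwa [Fin.card_Iic] at h
  have hcN : n - (i : ℕ) ≤ sN.card := by
    have h : (Finset.Ici i).card ≤ sN.card := by
      refine Finset.card_le_card_of_injOn eN (fun j hj => ?_) eN.injective.injOn
      rw [hsN, Finset.mem_coe, Finset.mem_filter]
      refine ⟨Finset.mem_univ _, ?_⟩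
      rw [hμN j]
      exact pow_le_pow_left₀ (hσN0 j) (hN1 (Finset.mem_Ici.1 hj)) 2
    rwa [Fin.card_Ici] at h
  set SM := Submodule.span ℂ (evb M '' ↑sM) with hSM
  set SN := Submodule.span ℂ (evb N '' ↑sN) with hSN
  have hdim : 0 < Module.finrank ℂ ↥(SM ⊓ SN) := by
    have h1 := Submodule.finrank_sup_add_finrank_inf_eq SM SN
    have h2 : Module.finrank ℂ ↥(SM ⊔ SN) ≤ n := by
      refine le_trans (Submodule.finrank_le _) ?_
      simp [finrank_euclideanSpace]
    have h3 : Module.finrank ℂ ↥SM = sM.card := finrank_span_basis_image (evb M) sM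
    have h4 : Module.finrank ℂ ↥SN = sN.card := finrank_span_basis_image (evb N) sN
    have h5 : (i : ℕ) < n := i.isLt
    omega
  have hne : SM ⊓ SN ≠ ⊥ := by
    intro h
    rw [h, finrank_bot] at hdim
    exact lt_irrefl 0 hdim
  obtain ⟨x, hx, hx0⟩ := Submodule.exists_mem_ne_zero_of_ne_bot hne
  have hxM : x ∈ SM := (Submodule.mem_inf.1 hx).1
  have hxN : x ∈ SN := (Submodule.mem_inf.1 hx).2
  have hxpos : (0 : ℝ) < ‖x‖ := norm_pos_iff.2 hx0
  have e1 : σM i * ‖x‖ ≤ ‖toEuclideanLin M x‖ := by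
    have h := sq_norm_ge M (σM i ^ 2) hxM
    have h2 : (σM i * ‖x‖) ^ 2 ≤ ‖toEuclideanLin M x‖ ^ 2 := by
      rw [mul_pow]; exact h
    nlinarith [norm_nonneg (toEuclideanLin M x), mul_nonneg (hσM0 i) (norm_nonneg x)]
  have e2 : ‖toEuclideanLin N x‖ ≤ σN i * ‖x‖ := by
    have h := sq_norm_le N (σN i ^ 2) hxN
    have h2 : ‖toEuclideanLin N x‖ ^ 2 ≤ (σN i * ‖x‖) ^ 2 := by
      rw [mul_pow]; exact h
    nlinarith [norm_nonneg (toEuclideanLin N x), mul_nonneg (hσN0 i) (norm_nonneg x)]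
  have e4 : ‖toEuclideanLin (M - N) x‖ ≤ specNorm (M - N) * ‖x‖ := by
    have h := (LinearMap.toContinuousLinearMap (toEuclideanLin (M - N))).le_opNorm x
    rwa [LinearMap.coe_toContinuousLinearMap'] at h
  have e3 : ‖toEuclideanLin M x‖ ≤ ‖toEuclideanLin N x‖ + specNorm (M - N) * ‖x‖ := by
    have hsplit : toEuclideanLin M x = toEuclideanLin N x + toEuclideanLin (M - N) x := by
      rw [map_sub, LinearMap.sub_apply]
      abel
    calc ‖toEuclideanLin M x‖ = ‖toEuclideanLin N x + toEuclideanLin (M - N) x‖ := by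
          rw [← hsplit]
      _ ≤ ‖toEuclideanLin N x‖ + ‖toEuclideanLin (M - N) x‖ := norm_add_le _ _
      _ ≤ ‖toEuclideanLin N x‖ + specNorm (M - N) * ‖x‖ := by linarith
  have key : (σM i - σN i) * ‖x‖ ≤ specNorm (M - N) * ‖x‖ := by nlinarith
  exact le_of_mul_le_mul_right key hxpos

lemma specNorm_sub_comm (M N : Matrix (Fin m) (Fin n) ℂ) :
    specNorm (N - M) = specNorm (M - N) := by
  unfold specNorm
  rw [show N - M = -(M - N) by rw [neg_sub], map_neg, map_neg, norm_neg]

end WeylAux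

/-- Weyl's inequality for singular values. -/
theorem weyl_singular_values {m n : ℕ} (M N : Matrix (Fin m) (Fin n) ℂ)
    (σM σN : Fin n → ℝ)
    (hM1 : Antitone σM)
    (hM2 : ∃ e : Equiv.Perm (Fin n), ∀ j, σM j =
      Real.sqrt ((Matrix.isHermitian_conjTranspose_mul_self M).eigenvalues (e j)))
    (hN1 : Antitone σN)
    (hN2 : ∃ e : Equiv.Perm (Fin n), ∀ j, σN j =
      Real.sqrt ((Matrix.isHermitian_conjTranspose_mul_self N).eigenvalues (e j)))
    (i : Fin n) (hi : (i : ℕ) < min m n) :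
    |σM i - σN i| ≤ specNorm (M - N) := by
  rw [abs_sub_le_iff]
  exact ⟨WeylAux.weyl_one_side M N σM σN hM1 hM2 hN1 hN2 i,
    WeylAux.specNorm_sub_comm M N ▸ WeylAux.weyl_one_side N M σN σM hN1 hN2 hM1 hM2 i⟩
end

section
/- Let $C \in \mathbb{R}^{m \times (n+1)}$, let $X \in \mathbb{R}^{(n+1)\times l}$ have orthonormal columns, and let $\hat{V} \in \mathbb{R}^{(n+1)\times l}$ satisfy $\|XX^T - \hat{V}\hat{V}^T\|_F \le \xi$ for some $\xi > 0$. Then $\|C - C\hat{V}\hat{V}^T\|_F^2 \le (1+\xi)\|C - CXX^T\|_F^2 + (1 + 1/\xi)\,\xi^2\,\|C\|_F^2$. -/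
open Matrix

/-- Frobenius norm of a real matrix. -/
noncomputable def frob {m n : ℕ} (A : Matrix (Fin m) (Fin n) ℝ) : ℝ :=
  Real.sqrt (∑ i, ∑ j, (A i j) ^ 2)

set_option maxHeartbeats 1000000
attribute [local instance] Matrix.frobeniusSeminormedAddCommGroup

lemma frob_eq_norm {m n : ℕ} (A : Matrix (Fin m) (Fin n) ℝ) : frob A = ‖A‖ := by
  rw [Matrix.frobenius_norm_def, frob, Real.sqrt_eq_rpow]
  congr 1
  apply Finset.sum_congr rfl
  intro i _
  apply Finset.sum_congr rfl
  intro j _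
  rw [Real.norm_eq_abs, Real.rpow_two, sq_abs]

lemma frob_nonneg {m n : ℕ} (A : Matrix (Fin m) (Fin n) ℝ) : 0 ≤ frob A := Real.sqrt_nonneg _

/-- error transfer between the projections XXᵀ and V̂V̂ᵀ. -/
theorem frob_sq_proj_perturbation {m n l : ℕ}
    (C : Matrix (Fin m) (Fin (n + 1)) ℝ)
    (X V : Matrix (Fin (n + 1)) (Fin l) ℝ)
    (hX : Xᵀ * X = 1)
    (ξ : ℝ) (hξ : 0 < ξ)
    (h : frob (X * Xᵀ - V * Vᵀ) ≤ ξ) :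
    frob (C - C * (V * Vᵀ)) ^ 2 ≤
      (1 + ξ) * frob (C - C * (X * Xᵀ)) ^ 2 + (1 + 1 / ξ) * ξ ^ 2 * frob C ^ 2 := by
  have key : C - C * (V * Vᵀ) = (C - C * (X * Xᵀ)) + C * (X * Xᵀ - V * Vᵀ) := by
    rw [Matrix.mul_sub]; exact (sub_add_sub_cancel C (C * (X * Xᵀ)) (C * (V * Vᵀ))).symm
  have tri : frob (C - C * (V * Vᵀ)) ≤
      frob (C - C * (X * Xᵀ)) + frob (C * (X * Xᵀ - V * Vᵀ)) := by
    simp only [frob_eq_norm, key]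
    exact norm_add_le _ _
  have sub : frob (C * (X * Xᵀ - V * Vᵀ)) ≤ frob C * frob (X * Xᵀ - V * Vᵀ) := by
    simp only [frob_eq_norm]
    exact Matrix.frobenius_norm_mul _ _
  set a := frob (C - C * (X * Xᵀ)) with ha
  set b := frob (C * (X * Xᵀ - V * Vᵀ)) with hb
  have hb2 : b ≤ frob C * ξ :=
    sub.trans (by nlinarith [frob_nonneg C, frob_nonneg (X * Xᵀ - V * Vᵀ)])
  have ha0 := frob_nonneg (C - C * (X * Xᵀ))
  have hb0 := frob_nonneg (C * (X * Xᵀ - V * Vᵀ))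
  have h0 := frob_nonneg (C - C * (V * Vᵀ))
  have hC0 := frob_nonneg C
  have hstep : frob (C - C * (V * Vᵀ)) ^ 2 ≤ (a + b) ^ 2 := by nlinarith
  have hineq : (a + b) ^ 2 ≤ (1 + ξ) * a ^ 2 + (1 + 1/ξ) * b ^ 2 := by
    have h1 : 0 ≤ (Real.sqrt ξ * a - b / Real.sqrt ξ) ^ 2 := sq_nonneg _
    have hs : Real.sqrt ξ ^ 2 = ξ := Real.sq_sqrt hξ.le
    have hs0 : 0 < Real.sqrt ξ := Real.sqrt_pos.mpr hξ
    have : 2 * a * b ≤ ξ * a ^ 2 + b ^ 2 / ξ := by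
      rw [← mul_le_mul_iff_of_pos_right hξ]
      field_simp
      nlinarith [sq_nonneg (ξ * a - b)]
    have : (a + b)^2 = a^2 + 2*a*b + b^2 := by ring
    rw [this]
    have hdiv : (1 + 1/ξ) * b ^ 2 = b^2 + b^2/ξ := by field_simp
    nlinarith
  have hb3 : (1 + 1/ξ) * b ^ 2 ≤ (1 + 1/ξ) * ξ ^ 2 * frob C ^ 2 := by
    have hpos : 0 < 1 + 1/ξ := by positivity
    have : b ^ 2 ≤ (frob C * ξ)^2 := by nlinarith
    nlinarith
  nlinarith [mul_le_mul_of_nonneg_left (sq_nonneg a) hξ.le]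
end
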